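/- Every element f of Γ_d, viewed as a rational function of t, is regular at t = 1 (each inverted Φ_s(t) with gcd(s,d) > 1 satisfies Φ_s(1) = 1 or a prime dividing d, hence a unit of ℤ[1/d]), its Taylor series at t = 1 lies in ℤ[1/d][[t−1]], and after the substitution t − 1 = Σ_{n≥1} C(1/d, n)(q−1)^n (where C(1/d,n) := (1/d)(1/d−1)⋯(1/d−n+1)/n! ∈ ℤ[1/d] is the generalized binomial coefficient), the resulting formal power series T_1(f) lies in ℤ[1/d][[q−1]]. -/

import Mathlib

noncomputable section

open Polynomial PowerSeries Finset

abbrev Rd (d : ℕ) : Subring ℚ := Subring.closure {((d : ℚ))⁻¹}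

lemma inv_d_mem (d : ℕ) : ((d:ℚ))⁻¹ ∈ Rd d := Subring.subset_closure rfl

lemma prime_inv_mem {d : ℕ} (hd : d ≠ 0) {p : ℕ} (hp : p ∣ d) (hp0 : p ≠ 0) :
    ((p:ℚ))⁻¹ ∈ Rd d := by
  obtain ⟨m, rfl⟩ := hp
  have hm : (m:ℚ) ≠ 0 := by
    have : m ≠ 0 := by rintro rfl; simp at hd
    exact_mod_cast this
  have hp' : (p:ℚ) ≠ 0 := by exact_mod_cast hp0
  have : ((p:ℚ))⁻¹ = (m:ℚ) * ((p*m : ℕ):ℚ)⁻¹ := by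
    push_cast; field_simp
  rw [this]
  exact mul_mem (natCast_mem _ m) (inv_d_mem _)

lemma coeff_mul_mem (S : Subring ℚ) {F G : PowerSeries ℚ} (hF : ∀ n, coeff n F ∈ S)
    (hG : ∀ n, coeff n G ∈ S) (n : ℕ) : coeff n (F * G) ∈ S := by
  rw [PowerSeries.coeff_mul]
  exact sum_mem fun x _ => mul_mem (hF _) (hG _)

lemma coeff_pow_mem (S : Subring ℚ) {F : PowerSeries ℚ} (hF : ∀ n, coeff n F ∈ S)
    (m n : ℕ) : coeff n (F ^ m) ∈ S := by
  induction m generalizing n with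
  | zero =>
    simp only [pow_zero]
    rw [PowerSeries.coeff_one]
    split
    · exact one_mem S
    · exact zero_mem S
  | succ m ih =>
    rw [pow_succ]
    exact coeff_mul_mem S (fun k => ih k) hF n

lemma coeff_inv_mem (S : Subring ℚ) {F : PowerSeries ℚ} (hF : ∀ n, coeff n F ∈ S)
    (h0 : (PowerSeries.constantCoeff F)⁻¹ ∈ S) (n : ℕ) : coeff n F⁻¹ ∈ S := by
  induction n using Nat.strong_induction_on with
  | _ n ih =>
    rw [PowerSeries.coeff_inv]
    split
    · exact h0
    · refine mul_mem (neg_mem h0) (sum_mem fun x hx => ?_)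
      split
      · exact mul_mem (hF _) (ih _ ‹_›)
      · exact zero_mem S

lemma comp_coeff_mem (S : Subring ℚ) {p : ℚ[X]} (hp : ∀ n, p.coeff n ∈ S) (n : ℕ) :
    (p.comp (Polynomial.X + 1)).coeff n ∈ S := by
  rw [Polynomial.comp_eq_sum_left, Polynomial.sum_def, Polynomial.finset_sum_coeff]
  refine sum_mem fun i _ => ?_
  rw [Polynomial.coeff_C_mul, Polynomial.coeff_X_add_one_pow]
  exact mul_mem (hp i) (natCast_mem _ _)

/-- The ring `Γ_d`: the localization of `ℤ[1/d][t^{±1}]` at the multiplicative set generated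
by the cyclotomic polynomials `Φ_s(t)` with `gcd(s,d) > 1`, realized as a subring of `ℚ(t)`. -/
def Gd (d : ℕ) : Subring (RatFunc ℚ) :=
  Subring.closure
    ({((d : RatFunc ℚ))⁻¹, RatFunc.X, (RatFunc.X)⁻¹} ∪
      {x | ∃ s : ℕ, 1 ≤ s ∧ 1 < Nat.gcd s d ∧
        x = (Polynomial.aeval RatFunc.X (cyclotomic s ℚ))⁻¹})

/-- The Taylor series at `t = 1` of a rational function `f = num/denom`: the power series
`num(1+X)·(denom(1+X))⁻¹` in `X = t − 1` (the inverse being taken in `ℚ[[X]]`, which is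
legitimate whenever `f` is regular at `t = 1`, i.e. `denom(1) ≠ 0`). -/
def taylorOne (x : RatFunc ℚ) : PowerSeries ℚ :=
  (((RatFunc.num x).comp (Polynomial.X + 1) : ℚ[X]) : PowerSeries ℚ) *
    ((((RatFunc.denom x).comp (Polynomial.X + 1) : ℚ[X]) : PowerSeries ℚ))⁻¹

/-- The series `t − 1 = Σ_{n≥1} C(1/d, n)·(q−1)^n`, a power series in `X = q − 1`. -/
def binomSeries (d : ℕ) : PowerSeries ℚ :=
  PowerSeries.mk fun n => if n = 0 then 0 else Ring.choose ((d : ℚ))⁻¹ n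

/-- Substitution `F(σ(X))` of a power series `σ` with zero constant term into a power
series `F`, given coefficient-wise by the finite sums
`coeff_k (F∘σ) = Σ_{j≤k} coeff_j F · coeff_k (σ^j)`. -/
def substSeries (F σ : PowerSeries ℚ) : PowerSeries ℚ :=
  PowerSeries.mk fun k =>
    ∑ j ∈ Finset.range (k + 1), (PowerSeries.coeff j F) * PowerSeries.coeff k (σ ^ j)

def rho : ℚ[X] →+* PowerSeries ℚ :=
  (Polynomial.coeToPowerSeries.ringHom).comp
    (Polynomial.eval₂RingHom Polynomial.C (Polynomial.X + 1))

lemma rho_apply (p : ℚ[X]) :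
    rho p = ((p.comp (Polynomial.X + 1) : ℚ[X]) : PowerSeries ℚ) := rfl

lemma coeff_rho_mem (S : Subring ℚ) {p : ℚ[X]} (hp : ∀ n, p.coeff n ∈ S) (n : ℕ) :
    coeff n (rho p) ∈ S := by
  rw [rho_apply, Polynomial.coeff_coe]
  exact comp_coeff_mem S hp n

lemma constantCoeff_rho (p : ℚ[X]) :
    PowerSeries.constantCoeff (rho p) = p.eval 1 := by
  rw [rho_apply, ← PowerSeries.coeff_zero_eq_constantCoeff, Polynomial.coeff_coe,
    Polynomial.coeff_zero_eq_eval_zero, Polynomial.eval_comp]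
  simp

lemma taylorOne_eq (x : RatFunc ℚ) :
    taylorOne x = rho x.num * (rho x.denom)⁻¹ := rfl

lemma taylorOne_unique {x : RatFunc ℚ} (hx : (RatFunc.denom x).eval 1 ≠ 0)
    {u : PowerSeries ℚ} (hu : u * rho x.denom = rho x.num) : taylorOne x = u := by
  have h : PowerSeries.constantCoeff (rho x.denom) ≠ 0 := by
    rw [constantCoeff_rho]; exact hx
  rw [taylorOne_eq]
  exact ((PowerSeries.eq_mul_inv_iff_mul_eq h).mpr hu).symm

lemma taylorOne_spec {x : RatFunc ℚ} (hx : (RatFunc.denom x).eval 1 ≠ 0) :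
    taylorOne x * rho x.denom = rho x.num := by
  have h : PowerSeries.constantCoeff (rho x.denom) ≠ 0 := by
    rw [constantCoeff_rho]; exact hx
  rw [taylorOne_eq, mul_assoc, PowerSeries.inv_mul_cancel _ h, mul_one]

lemma rho_ne_zero {p : ℚ[X]} (hp : p.eval 1 ≠ 0) : rho p ≠ 0 := by
  intro h
  apply hp
  rw [← constantCoeff_rho, h, map_zero]

lemma eval_one_ne_of_dvd {a b : ℚ[X]} (h : a ∣ b) (hb : b.eval 1 ≠ 0) : a.eval 1 ≠ 0 := by
  obtain ⟨c, rfl⟩ := h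
  intro ha
  apply hb
  rw [Polynomial.eval_mul, ha, zero_mul]

def Reg (d : ℕ) (x : RatFunc ℚ) : Prop :=
  (RatFunc.denom x).eval 1 ≠ 0 ∧ ∀ n, PowerSeries.coeff n (taylorOne x) ∈ Rd d

lemma denom_mul_eval {x y : RatFunc ℚ} (hx1 : (RatFunc.denom x).eval 1 ≠ 0)
    (hy1 : (RatFunc.denom y).eval 1 ≠ 0) : (RatFunc.denom (x*y)).eval 1 ≠ 0 :=
  eval_one_ne_of_dvd (RatFunc.denom_mul_dvd x y)
    (by rw [Polynomial.eval_mul]; exact mul_ne_zero hx1 hy1)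

lemma taylorOne_mul {x y : RatFunc ℚ} (hx1 : (RatFunc.denom x).eval 1 ≠ 0)
    (hy1 : (RatFunc.denom y).eval 1 ≠ 0) :
    taylorOne (x * y) = taylorOne x * taylorOne y := by
    apply taylorOne_unique (denom_mul_eval hx1 hy1)
    have e1 := taylorOne_spec hx1
    have e2 := taylorOne_spec hy1
    have e3 : rho (x*y).num * (rho x.denom * rho y.denom)
        = rho x.num * rho y.num * rho (x*y).denom := by
      have := congrArg rho (RatFunc.num_denom_mul x y)
      simpa only [map_mul] using this
    have hDxy : rho x.denom * rho y.denom ≠ 0 :=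
      mul_ne_zero (rho_ne_zero hx1) (rho_ne_zero hy1)
    apply mul_right_cancel₀ hDxy
    linear_combination (taylorOne y * rho y.denom * rho (x*y).denom) * e1
      + (rho x.num * rho (x*y).denom) * e2 - e3

lemma Reg.mul {d : ℕ} {x y : RatFunc ℚ} (hx : Reg d x) (hy : Reg d y) : Reg d (x * y) := by
  obtain ⟨hx1, hx2⟩ := hx
  obtain ⟨hy1, hy2⟩ := hy
  refine ⟨denom_mul_eval hx1 hy1, fun n => ?_⟩
  rw [taylorOne_mul hx1 hy1]
  exact coeff_mul_mem _ hx2 hy2 n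

lemma Reg.add {d : ℕ} {x y : RatFunc ℚ} (hx : Reg d x) (hy : Reg d y) : Reg d (x + y) := by
  obtain ⟨hx1, hx2⟩ := hx
  obtain ⟨hy1, hy2⟩ := hy
  have hxy : (RatFunc.denom (x+y)).eval 1 ≠ 0 :=
    eval_one_ne_of_dvd (RatFunc.denom_add_dvd x y) (by rw [Polynomial.eval_mul]; exact mul_ne_zero hx1 hy1)
  have key : taylorOne (x + y) = taylorOne x + taylorOne y := by
    apply taylorOne_unique hxy
    have e1 := taylorOne_spec hx1
    have e2 := taylorOne_spec hy1
    have e3 : rho (x+y).num * (rho x.denom * rho y.denom)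
        = (rho x.num * rho y.denom + rho x.denom * rho y.num) * rho (x+y).denom := by
      have := congrArg rho (RatFunc.num_denom_add x y)
      simpa only [map_mul, map_add] using this
    have hDxy : rho x.denom * rho y.denom ≠ 0 :=
      mul_ne_zero (rho_ne_zero hx1) (rho_ne_zero hy1)
    apply mul_right_cancel₀ hDxy
    linear_combination (rho y.denom * rho (x+y).denom) * e1
      + (rho x.denom * rho (x+y).denom) * e2 - e3
  refine ⟨hxy, fun n => ?_⟩
  rw [key, map_add]
  exact add_mem (hx2 n) (hy2 n)

lemma denom_algebraMap_eval (p : ℚ[X]) :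
    (RatFunc.denom (algebraMap ℚ[X] (RatFunc ℚ) p)).eval 1 ≠ 0 := by
  rw [RatFunc.denom_algebraMap]; simp

lemma taylorOne_algebraMap (p : ℚ[X]) :
    taylorOne (algebraMap ℚ[X] (RatFunc ℚ) p) = rho p := by
  apply taylorOne_unique (denom_algebraMap_eval p)
  rw [RatFunc.denom_algebraMap, RatFunc.num_algebraMap, map_one, mul_one]

lemma Reg_algebraMap {d : ℕ} {p : ℚ[X]} (hp : ∀ n, p.coeff n ∈ Rd d) :
    Reg d (algebraMap ℚ[X] (RatFunc ℚ) p) := by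
  refine ⟨denom_algebraMap_eval p, fun n => ?_⟩
  rw [taylorOne_algebraMap]
  exact coeff_rho_mem _ hp n

lemma Reg.zero {d : ℕ} : Reg d (0 : RatFunc ℚ) := by
  have := Reg_algebraMap (d := d) (p := 0) (by intro n; simpa using zero_mem (Rd d))
  simpa using this

lemma Reg.one {d : ℕ} : Reg d (1 : RatFunc ℚ) := by
  have := Reg_algebraMap (d := d) (p := 1) (by
    intro n
    rw [Polynomial.coeff_one]
    split
    · exact one_mem _
    · exact zero_mem _)
  simpa using this

lemma Reg.neg {d : ℕ} {x : RatFunc ℚ} (hx : Reg d x) : Reg d (-x) := by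
  have hm : Reg d (algebraMap ℚ[X] (RatFunc ℚ) (-1)) := by
    apply Reg_algebraMap
    intro n
    rw [Polynomial.coeff_neg, Polynomial.coeff_one]
    split
    · exact neg_mem (one_mem _)
    · simpa using zero_mem (Rd d)
  have := hm.mul hx
  rw [map_neg, map_one, neg_one_mul] at this
  exact this

lemma gen_d_inv {d : ℕ} (hd : 1 ≤ d) : Reg d ((d : RatFunc ℚ))⁻¹ := by
  have hd0 : (d : ℚ) ≠ 0 := Nat.cast_ne_zero.mpr (by omega)
  have hrepr : ((d : RatFunc ℚ))⁻¹ = algebraMap ℚ[X] (RatFunc ℚ) (Polynomial.C ((d:ℚ))⁻¹) := by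
    have hcast : (d : RatFunc ℚ) = algebraMap ℚ[X] (RatFunc ℚ) (Polynomial.C ((d:ℚ))) := by
      rw [Polynomial.C_eq_natCast, map_natCast]
    rw [hcast]
    refine inv_eq_of_mul_eq_one_left ?_
    rw [← map_mul, ← Polynomial.C_mul, inv_mul_cancel₀ hd0, Polynomial.C_1, map_one]
  rw [hrepr]
  apply Reg_algebraMap
  intro n
  rw [Polynomial.coeff_C]
  split
  · exact inv_d_mem d
  · exact zero_mem _

lemma gen_X {d : ℕ} : Reg d (RatFunc.X : RatFunc ℚ) := by
  rw [← RatFunc.algebraMap_X]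
  apply Reg_algebraMap
  intro n
  rw [Polynomial.coeff_X]
  split
  · exact one_mem _
  · exact zero_mem _

lemma Reg_inv_algebraMap {d : ℕ} {q : ℚ[X]} (hq0 : q ≠ 0) (hcoeff : ∀ n, q.coeff n ∈ Rd d)
    (h1 : q.eval 1 ≠ 0) (h1' : (q.eval 1)⁻¹ ∈ Rd d) :
    Reg d ((algebraMap ℚ[X] (RatFunc ℚ) q))⁻¹ := by
  have hfne : algebraMap ℚ[X] (RatFunc ℚ) q ≠ 0 := by
    simpa using hq0
  have hrepr : ((algebraMap ℚ[X] (RatFunc ℚ) q))⁻¹ =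
      algebraMap ℚ[X] (RatFunc ℚ) 1 / algebraMap ℚ[X] (RatFunc ℚ) q := by
    rw [map_one, one_div]
  have hddvd : RatFunc.denom ((algebraMap ℚ[X] (RatFunc ℚ) q))⁻¹ ∣ q := by
    rw [hrepr]; exact RatFunc.denom_div_dvd 1 q
  have hden1 : (RatFunc.denom ((algebraMap ℚ[X] (RatFunc ℚ) q))⁻¹).eval 1 ≠ 0 :=
    eval_one_ne_of_dvd hddvd h1
  have hcc : PowerSeries.constantCoeff (rho q) ≠ 0 := by
    rw [constantCoeff_rho]; exact h1
  have key : taylorOne ((algebraMap ℚ[X] (RatFunc ℚ) q))⁻¹ = (rho q)⁻¹ := by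
    rw [PowerSeries.eq_inv_iff_mul_eq_one hcc]
    have := taylorOne_mul hden1 (denom_algebraMap_eval q)
    rw [inv_mul_cancel₀ hfne, taylorOne_algebraMap] at this
    rw [← this]
    have h1map : (1 : RatFunc ℚ) = algebraMap ℚ[X] (RatFunc ℚ) 1 := (map_one _).symm
    rw [h1map, taylorOne_algebraMap, map_one]
  refine ⟨hden1, fun n => ?_⟩
  rw [key]
  refine coeff_inv_mem _ (coeff_rho_mem _ hcoeff) ?_ n
  rw [constantCoeff_rho]
  exact h1'

lemma gen_X_inv {d : ℕ} : Reg d ((RatFunc.X : RatFunc ℚ))⁻¹ := by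
  rw [← RatFunc.algebraMap_X]
  refine Reg_inv_algebraMap Polynomial.X_ne_zero ?_ (by simp) (by simpa using one_mem (Rd d))
  intro n
  rw [Polynomial.coeff_X]
  split
  · exact one_mem _
  · exact zero_mem _

lemma cyclotomic_coeff_mem {d : ℕ} (s n : ℕ) : (cyclotomic s ℚ).coeff n ∈ Rd d := by
  have : cyclotomic s ℚ = (cyclotomic s ℤ).map (Int.castRingHom ℚ) := (map_cyclotomic_int s ℚ).symm
  rw [this, Polynomial.coeff_map]
  exact intCast_mem _ _

lemma gen_cyclotomic {d : ℕ} (hd : 1 ≤ d) {s : ℕ} (hs : 1 ≤ s) (hgcd : 1 < Nat.gcd s d) :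
    Reg d ((Polynomial.aeval RatFunc.X (cyclotomic s ℚ))⁻¹ : RatFunc ℚ) := by
  have haev : Polynomial.aeval RatFunc.X (cyclotomic s ℚ)
      = algebraMap ℚ[X] (RatFunc ℚ) (cyclotomic s ℚ) := by
    rw [← RatFunc.algebraMap_X, Polynomial.aeval_algebraMap_apply, Polynomial.aeval_X_left_apply]
  rw [haev]
  have hs2 : 2 ≤ s := by
    have h1 : Nat.gcd s d ∣ s := Nat.gcd_dvd_left s d
    have := Nat.le_of_dvd (by omega) h1
    omega
  have heval : (cyclotomic s ℚ).eval 1 ≠ 0 ∧ ((cyclotomic s ℚ).eval 1)⁻¹ ∈ Rd d := by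
    by_cases hpp : ∃ p k, Nat.Prime p ∧ p ^ (k + 1) = s
    · obtain ⟨p, k, hp, rfl⟩ := hpp
      haveI : Fact p.Prime := ⟨hp⟩
      have he : (cyclotomic (p ^ (k + 1)) ℚ).eval 1 = p :=
        Polynomial.eval_one_cyclotomic_prime_pow k
      have hpd : p ∣ d := by
        have h1 : Nat.gcd (p ^ (k + 1)) d ∣ p ^ (k + 1) := Nat.gcd_dvd_left _ _
        obtain ⟨j, hjk, hj⟩ := (Nat.dvd_prime_pow hp).mp h1
        have hj0 : j ≠ 0 := by
          rintro rfl
          rw [pow_zero] at hj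
          omega
        have : p ∣ Nat.gcd (p ^ (k + 1)) d := hj ▸ dvd_pow_self p hj0
        exact this.trans (Nat.gcd_dvd_right _ _)
      have hp0 : (p : ℚ) ≠ 0 := Nat.cast_ne_zero.mpr hp.ne_zero
      rw [he]
      exact ⟨hp0, prime_inv_mem (by omega) hpd hp.ne_zero⟩
    · have he : (cyclotomic s ℚ).eval 1 = 1 := by
        apply Polynomial.eval_one_cyclotomic_not_prime_pow
        intro p hp k hk
        cases k with
        | zero => rw [pow_zero] at hk; omega
        | succ k => exact hpp ⟨p, k, hp, hk⟩
      rw [he]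
      simpa using one_mem (Rd d)
  exact Reg_inv_algebraMap (cyclotomic_ne_zero s ℚ) (fun n => cyclotomic_coeff_mem s n)
    heval.1 heval.2

def mkChoose (r : ℚ) : PowerSeries ℚ := PowerSeries.mk fun n => Ring.choose r n

lemma mkChoose_mul (r s : ℚ) : mkChoose r * mkChoose s = mkChoose (r + s) := by
  ext n
  simp only [mkChoose, PowerSeries.coeff_mul, PowerSeries.coeff_mk]
  rw [Ring.add_choose_eq n (Commute.all r s)]

lemma mkChoose_zero : mkChoose (0 : ℚ) = 1 := by
  ext n
  rw [mkChoose, PowerSeries.coeff_mk, PowerSeries.coeff_one]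
  have : (0 : ℚ) = ((0 : ℕ) : ℚ) := by norm_num
  rw [this, Ring.choose_natCast]
  cases n with
  | zero => simp
  | succ n => simp

lemma mkChoose_pow (r : ℚ) (m : ℕ) : (mkChoose r) ^ m = mkChoose ((m : ℚ) * r) := by
  induction m with
  | zero => simpa using mkChoose_zero.symm
  | succ m ih =>
    rw [pow_succ, ih, mkChoose_mul]
    push_cast
    ring_nf

lemma mkChoose_one : mkChoose (1 : ℚ) = 1 + PowerSeries.X := by
  ext n
  rw [mkChoose, PowerSeries.coeff_mk]
  have : (1 : ℚ) = ((1 : ℕ) : ℚ) := by norm_num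
  rw [this, Ring.choose_natCast]
  rw [map_add, PowerSeries.coeff_one, PowerSeries.coeff_X]
  match n with
  | 0 => simp
  | 1 => simp
  | (n+2) => simp [Nat.choose_eq_zero_of_lt (show 1 < n + 2 by omega)]

lemma one_add_binomSeries (d : ℕ) : 1 + binomSeries d = mkChoose ((d : ℚ))⁻¹ := by
  ext n
  rw [map_add, binomSeries, PowerSeries.coeff_mk, mkChoose, PowerSeries.coeff_mk,
    PowerSeries.coeff_one]
  cases n with
  | zero => simp [Ring.choose_zero_right]
  | succ n => simp

lemma binom_pow {d : ℕ} (hd : 1 ≤ d) : (binomSeries d + 1) ^ d = 1 + PowerSeries.X := by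
  have hd0 : (d : ℚ) ≠ 0 := Nat.cast_ne_zero.mpr (by omega)
  rw [add_comm, one_add_binomSeries, mkChoose_pow, mul_inv_cancel₀ hd0, mkChoose_one]

lemma constantCoeff_binomSeries (d : ℕ) :
    PowerSeries.constantCoeff (binomSeries d) = 0 := by
  rw [← PowerSeries.coeff_zero_eq_constantCoeff, binomSeries, PowerSeries.coeff_mk]
  simp

lemma binom_coeff_mem {d : ℕ} (hd : 1 ≤ d) (n : ℕ) :
    PowerSeries.coeff n (binomSeries d) ∈ Rd d := by
  induction n using Nat.strong_induction_on with
  | _ n ih =>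
  by_cases hn : n = 0
  · subst hn; rw [binomSeries, PowerSeries.coeff_mk]; simpa using zero_mem (Rd d)
  have hpow : ∀ m, ∀ j, j < n → PowerSeries.coeff j ((binomSeries d) ^ m) ∈ Rd d := by
    intro m
    induction m with
    | zero =>
      intro j _
      rw [pow_zero, PowerSeries.coeff_one]
      split
      · exact one_mem _
      · exact zero_mem _
    | succ m ihm =>
      intro j hj
      rw [pow_succ, PowerSeries.coeff_mul]
      refine sum_mem fun x hx => ?_
      have hx1 : x.1 ≤ j := Finset.HasAntidiagonal.antidiagonal.fst_le hx
      have hx2 : x.2 ≤ j := Finset.HasAntidiagonal.antidiagonal.snd_le hx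
      exact mul_mem (ihm x.1 (lt_of_le_of_lt hx1 hj)) (ih x.2 (lt_of_le_of_lt hx2 hj))
  have hpow2 : ∀ m, 2 ≤ m → PowerSeries.coeff n ((binomSeries d) ^ m) ∈ Rd d := by
    intro m hm
    obtain ⟨m', rfl⟩ : ∃ m', m = m' + 1 := ⟨m - 1, by omega⟩
    rw [pow_succ', PowerSeries.coeff_mul]
    refine sum_mem fun x hx => ?_
    have hxsum : x.1 + x.2 = n := Finset.HasAntidiagonal.mem_antidiagonal.mp hx
    by_cases h1 : x.1 = 0
    · have hz : PowerSeries.coeff x.1 (binomSeries d) = 0 := by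
        rw [h1, binomSeries, PowerSeries.coeff_mk]; simp
      rw [hz, zero_mul]; exact zero_mem _
    by_cases h2 : x.2 = 0
    · have hz : PowerSeries.coeff x.2 ((binomSeries d) ^ m') = 0 := by
        rw [h2, PowerSeries.coeff_zero_eq_constantCoeff, map_pow, constantCoeff_binomSeries,
          zero_pow (show m' ≠ 0 by omega)]
      rw [hz, mul_zero]; exact zero_mem _
    · exact mul_mem (ih x.1 (by omega)) (hpow m' x.2 (by omega))
  have E := congrArg (PowerSeries.coeff n) (binom_pow hd)
  rw [add_pow, map_sum] at E
  have Eterm : ∀ k ∈ Finset.range (d+1),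
      PowerSeries.coeff n ((binomSeries d)^k * 1^(d-k) * ((d.choose k : ℕ) : PowerSeries ℚ))
        = PowerSeries.coeff n ((binomSeries d)^k) * (d.choose k : ℚ) := by
    intro k _
    rw [one_pow, mul_one, ← map_natCast (PowerSeries.C (R := ℚ)) (d.choose k), PowerSeries.coeff_mul_C]
  rw [Finset.sum_congr rfl Eterm] at E
  have h1mem : (1 : ℕ) ∈ Finset.range (d+1) := Finset.mem_range.mpr (by omega)
  rw [← Finset.add_sum_erase _ _ h1mem] at E
  set A := ∑ k ∈ (Finset.range (d+1)).erase 1,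
      PowerSeries.coeff n ((binomSeries d)^k) * (d.choose k : ℚ) with hA
  have hAmem : A ∈ Rd d := by
    refine sum_mem fun k hk => ?_
    obtain ⟨hk1, hk2⟩ := Finset.mem_erase.mp hk
    refine mul_mem ?_ (natCast_mem _ _)
    by_cases hk0 : k = 0
    · subst hk0
      rw [pow_zero, PowerSeries.coeff_one, if_neg hn]
      exact zero_mem _
    · exact hpow2 k (by omega)
  have hc : PowerSeries.coeff n (1 + PowerSeries.X) ∈ Rd d := by
    rw [map_add, PowerSeries.coeff_one, PowerSeries.coeff_X]
    refine add_mem ?_ ?_ <;> (split; exacts [one_mem _, zero_mem _])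
  have hd0 : (d : ℚ) ≠ 0 := Nat.cast_ne_zero.mpr (by omega)
  rw [pow_one, Nat.choose_one_right] at E
  have hfinal : PowerSeries.coeff n (binomSeries d)
      = (PowerSeries.coeff n (1 + PowerSeries.X) - A) * ((d : ℚ))⁻¹ := by
    have h' : PowerSeries.coeff n (binomSeries d) * (d : ℚ)
        = PowerSeries.coeff n (1 + PowerSeries.X) - A := by linarith [E]
    rw [← h', mul_assoc, mul_inv_cancel₀ hd0, mul_one]
  rw [hfinal]
  exact mul_mem (sub_mem hc hAmem) (inv_d_mem d)

lemma ring_choose_mem {d : ℕ} (hd : 1 ≤ d) (n : ℕ) :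
    Ring.choose ((d : ℚ))⁻¹ n ∈ Rd d := by
  cases n with
  | zero => rw [Ring.choose_zero_right]; exact one_mem _
  | succ n =>
    have := binom_coeff_mem hd (n+1)
    rw [binomSeries, PowerSeries.coeff_mk, if_neg (by omega : n + 1 ≠ 0)] at this
    exact this

lemma Reg_of_mem_Gd {d : ℕ} (hd : 1 ≤ d) {x : RatFunc ℚ} (hx : x ∈ Gd d) : Reg d x := by
  induction hx using Subring.closure_induction with
  | mem x hx =>
    simp only [Set.mem_union, Set.mem_insert_iff, Set.mem_singleton_iff, Set.mem_setOf_eq] at hx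
    rcases hx with ((rfl | rfl | rfl) | ⟨s, hs, hgcd, rfl⟩)
    · exact gen_d_inv hd
    · exact gen_X
    · exact gen_X_inv
    · exact gen_cyclotomic hd hs hgcd
  | zero => exact Reg.zero
  | one => exact Reg.one
  | add x y _ _ hx hy => exact hx.add hy
  | neg x _ hx => exact hx.neg
  | mul x y _ _ hx hy => exact hx.mul hy

/-- Every `f ∈ Γ_d` is regular at `t = 1`, its Taylor series at `t = 1`
lies in `ℤ[1/d][[t−1]]`, the generalized binomial coefficients `C(1/d,n)` lie in `ℤ[1/d]`,
and after substituting `t − 1 = Σ_{n≥1} C(1/d,n)(q−1)^n` the resulting series `T_1(f)` lies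
in `ℤ[1/d][[q−1]]`.  Here `ℤ[1/d]` is the subring of `ℚ` generated by `1/d`. -/
theorem taylor_expansion_integral (d : ℕ) (hd : 1 ≤ d) (x : Gd d) :
    (RatFunc.denom (x : RatFunc ℚ)).eval 1 ≠ 0 ∧
    (∀ n, PowerSeries.coeff n (taylorOne (x : RatFunc ℚ)) ∈
      Subring.closure {((d : ℚ))⁻¹}) ∧
    (∀ n, Ring.choose ((d : ℚ))⁻¹ n ∈ Subring.closure {((d : ℚ))⁻¹}) ∧
    (∀ n, PowerSeries.coeff n (substSeries (taylorOne (x : RatFunc ℚ)) (binomSeries d)) ∈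
      Subring.closure {((d : ℚ))⁻¹}) := by
  obtain ⟨hreg, hcoeff⟩ := Reg_of_mem_Gd hd x.2
  refine ⟨hreg, hcoeff, ring_choose_mem hd, fun n => ?_⟩
  rw [substSeries, PowerSeries.coeff_mk]
  refine sum_mem fun j _ => ?_
  exact mul_mem (hcoeff j) (coeff_pow_mem _ (binom_coeff_mem hd) j n)

end
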